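/- Let X be a separable topological space, T a discrete space, Y = αT the Alexandroff (one-point) compactification of T, and f : X × Y → ℝ a separately continuous function. Then the pair of extremal sections (∧_f, ∨_f) is a stable pair of Hahn on X. -/
import Mathlib


open Set OnePoint

lemma countable_ne_sec {T : Type*} [TopologicalSpace T] [DiscreteTopology T]
    (g : OnePoint T → ℝ) (hg : Continuous g) :
    {t : T | g t ≠ g ∞}.Countable := by
  have heq : {t : T | g t ≠ g ∞} = ⋃ n : ℕ, {t : T | 1/(n+1 : ℝ) ≤ |g t - g ∞|} := by
    ext t
    simp only [Set.mem_setOf_eq, Set.mem_iUnion]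
    constructor
    · intro h
      obtain ⟨n, hn⟩ := exists_nat_one_div_lt (abs_pos.2 (sub_ne_zero.2 h))
      exact ⟨n, hn.le⟩
    · rintro ⟨n, hn⟩ h
      rw [h, sub_self, abs_zero] at hn
      have : (0:ℝ) < 1/(n+1) := by positivity
      linarith
  rw [heq]
  refine Set.countable_iUnion fun n => Set.Finite.countable ?_
  set s : Set (OnePoint T) := {y | |g y - g ∞| < 1/(n+1)} with hs
  have hopen : IsOpen s :=
    isOpen_lt ((hg.sub continuous_const).abs) continuous_const
  have hmem : ∞ ∈ s := by
    simp only [hs, Set.mem_setOf_eq, sub_self, abs_zero]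
    positivity
  have hcpt : IsCompact ((↑) ⁻¹' s : Set T)ᶜ :=
    ((OnePoint.isOpen_iff_of_mem hmem).1 hopen).2
  have hfin : ((↑) ⁻¹' s : Set T)ᶜ.Finite := hcpt.finite_of_discrete
  refine hfin.subset fun t ht => ?_
  simp only [Set.mem_compl_iff, Set.mem_preimage, hs, Set.mem_setOf_eq, not_lt]
  exact ht



/-- A pair `(g, h)` of real-valued functions on `X` is a *stable pair of Hahn*
if there is a sequence of continuous functions `u n` such that for every `x`,
`g x = min_n (u n x)` and `h x = max_n (u n x)` (the infimum and supremum are attained). -/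
def StablePairOfHahn {X : Type*} [TopologicalSpace X] (g h : X → ℝ) : Prop :=
  ∃ u : ℕ → X → ℝ, (∀ n, Continuous (u n)) ∧
    ∀ x, IsLeast (Set.range fun n => u n x) (g x) ∧
      IsGreatest (Set.range fun n => u n x) (h x)

theorem stmt8 {X T : Type*} [TopologicalSpace X] [TopologicalSpace.SeparableSpace X]
    [TopologicalSpace T] [DiscreteTopology T]
    (f : X × OnePoint T → ℝ)
    (hf1 : ∀ x : X, Continuous fun y : OnePoint T => f (x, y))
    (hf2 : ∀ y : OnePoint T, Continuous fun x : X => f (x, y)) :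
    StablePairOfHahn (fun x => ⨅ y : OnePoint T, f (x, y))
      (fun x => ⨆ y : OnePoint T, f (x, y)) := by
  obtain ⟨D, hDc, hDd⟩ := TopologicalSpace.exists_countable_dense X
  -- the countable "exceptional" set in OnePoint T
  set S : Set (OnePoint T) := insert ∞ ((↑) '' (⋃ x ∈ D, {t : T | f (x, ↑t) ≠ f (x, ∞)}))
    with hS
  have hSc : S.Countable := by
    refine Set.Countable.insert _ (Set.Countable.image ?_ _)
    exact Set.Countable.biUnion hDc fun x _ => countable_ne_sec _ (hf1 x)
  have hSne : S.Nonempty := ⟨∞, Set.mem_insert _ _⟩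
  obtain ⟨y, hy⟩ := Set.Countable.exists_eq_range hSc hSne
  -- key: outside S, f (x, t) = f (x, ∞) for all x
  have key : ∀ (t : T), (↑t : OnePoint T) ∉ S → ∀ x, f (x, ↑t) = f (x, ∞) := by
    intro t ht
    have : Set.EqOn (fun x => f (x, ↑t)) (fun x => f (x, ∞)) D := by
      intro x hx
      by_contra h
      exact ht (Set.mem_insert_iff.2 (Or.inr ⟨t, Set.mem_biUnion hx h, rfl⟩))
    have := Continuous.ext_on hDd (hf2 _) (hf2 _) this
    intro x; exact congrFun this x
  refine ⟨fun n x => f (x, y n), fun n => hf2 _, fun x => ?_⟩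
  -- ranges coincide
  have hrange : (Set.range fun n => f (x, y n)) = Set.range fun z : OnePoint T => f (x, z) := by
    apply Set.Subset.antisymm
    · rintro _ ⟨n, rfl⟩; exact ⟨y n, rfl⟩
    · rintro _ ⟨z, rfl⟩
      have hinf : ∞ ∈ Set.range y := hy ▸ Set.mem_insert _ _
      obtain ⟨n0, hn0⟩ := hinf
      cases z with
      | infty =>
        exact ⟨n0, by show f (x, y n0) = _; rw [hn0]⟩
      | coe t =>
        by_cases htS : (↑t : OnePoint T) ∈ S
        · obtain ⟨n, hn⟩ := hy ▸ htS
          exact ⟨n, by show f (x, y n) = _; rw [hn]⟩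
        · exact ⟨n0, by show f (x, y n0) = _; rw [hn0]; exact (key t htS x).symm⟩
  obtain ⟨ymin, -, hmin⟩ := isCompact_univ.exists_isMinOn (Set.univ_nonempty)
    (hf1 x).continuousOn
  obtain ⟨ymax, -, hmax⟩ := isCompact_univ.exists_isMaxOn (Set.univ_nonempty)
    (hf1 x).continuousOn
  have hleast : IsLeast (Set.range fun z : OnePoint T => f (x, z)) (f (x, ymin)) :=
    ⟨⟨ymin, rfl⟩, by rintro _ ⟨z, rfl⟩; exact hmin (Set.mem_univ z)⟩
  have hgreat : IsGreatest (Set.range fun z : OnePoint T => f (x, z)) (f (x, ymax)) :=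
    ⟨⟨ymax, rfl⟩, by rintro _ ⟨z, rfl⟩; exact hmax (Set.mem_univ z)⟩
  have hinf : (⨅ z : OnePoint T, f (x, z)) = f (x, ymin) := by
    rw [iInf, hleast.csInf_eq]
  have hsup : (⨆ z : OnePoint T, f (x, z)) = f (x, ymax) := by
    rw [iSup, hgreat.csSup_eq]
  constructor
  · show IsLeast (Set.range fun n => f (x, y n)) (⨅ z : OnePoint T, f (x, z))
    rw [hrange, hinf]; exact hleast
  · show IsGreatest (Set.range fun n => f (x, y n)) (⨆ z : OnePoint T, f (x, z))
    rw [hrange, hsup]; exact hgreat
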